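/- Let s > 1/2. There exists a constant C = C(s) such that for every measurable f : ℝ³ → ℂ with f ∈ L²(ℝ³) and x ↦ |x|^s f(x) ∈ L²(ℝ³), one has f ∈ L^{3/2}(ℝ³) with ‖f‖_{L^{3/2}(ℝ³)} ≤ C ‖f‖_{L²(ℝ³)}^{1 − 1/(2s)} · ‖ |x|^s f ‖_{L²(ℝ³)}^{1/(2s)}. -/

import Mathlib

open MeasureTheory

open Metric Set ENNReal

local notation "E3" => EuclideanSpace ℝ (Fin 3)

lemma scale_lintegral (h : E3 → ℝ≥0∞) (hm : Measurable h) {R : ℝ} (hR : 0 < R) :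
    ∫⁻ x, h x ∂(volume : Measure E3) = ENNReal.ofReal (R ^ (3:ℝ)) * ∫⁻ y, h (R • y) ∂volume := by
  have hmap := Measure.map_addHaar_smul (volume : Measure E3) (ne_of_gt hR)
  have h1 : ∫⁻ y, h (R • y) ∂(volume : Measure E3)
      = ∫⁻ x, h x ∂(Measure.map (R • ·) (volume : Measure E3)) :=
    (lintegral_map hm (measurable_const_smul R)).symm
  rw [h1, hmap, lintegral_smul_measure]
  rw [smul_eq_mul, ← mul_assoc]
  have h3 : |(R ^ Module.finrank ℝ E3 : ℝ)⁻¹| = (R ^ (3:ℝ))⁻¹ := by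
    rw [finrank_euclideanSpace_fin, abs_of_pos (by positivity), ← Real.rpow_natCast R]
    norm_num
  rw [h3, ← ENNReal.ofReal_mul (by positivity), mul_inv_cancel₀ (by positivity), ENNReal.ofReal_one,
    one_mul]

/-- the tail integral -/
noncomputable def Jt (s R : ℝ) : ℝ≥0∞ :=
  ∫⁻ x in (ball (0:E3) R)ᶜ, ENNReal.ofReal (‖x‖ ^ (-(6*s))) ∂volume

lemma Jt_meas (s R : ℝ) : Measurable
    (((ball (0:E3) R)ᶜ).indicator (fun x => ENNReal.ofReal (‖x‖ ^ (-(6*s))))) :=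
  Measurable.indicator (measurable_norm.pow measurable_const).ennreal_ofReal
    measurableSet_ball.compl

lemma Jt_eq (s : ℝ) {R : ℝ} (hR : 0 < R) :
    Jt s R = ENNReal.ofReal (R ^ ((3:ℝ) - 6*s)) * Jt s 1 := by
  have key := scale_lintegral _ (Jt_meas s R) hR
  rw [Jt, ← lintegral_indicator measurableSet_ball.compl, key]
  have hpt : ∀ y : E3, ((ball (0:E3) R)ᶜ).indicator
      (fun x => ENNReal.ofReal (‖x‖ ^ (-(6*s)))) (R • y)
      = ENNReal.ofReal (R ^ (-(6*s))) *
        ((ball (0:E3) 1)ᶜ).indicator (fun x => ENNReal.ofReal (‖x‖ ^ (-(6*s)))) y := by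
    intro y
    have hmem : R • y ∈ (ball (0:E3) R)ᶜ ↔ y ∈ (ball (0:E3) 1)ᶜ := by
      simp only [mem_compl_iff, mem_ball, dist_zero_right, not_lt, norm_smul,
        Real.norm_eq_abs, abs_of_pos hR]
      constructor
      · intro h1; nlinarith [norm_nonneg y]
      · intro h1; nlinarith
    by_cases hy : y ∈ (ball (0:E3) 1)ᶜ
    · rw [Set.indicator_of_mem (hmem.mpr hy), Set.indicator_of_mem hy]
      rw [norm_smul, Real.norm_eq_abs, abs_of_pos hR,
        Real.mul_rpow hR.le (norm_nonneg y), ENNReal.ofReal_mul (by positivity)]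
    · rw [Set.indicator_of_notMem (fun h => hy (hmem.mp h)), Set.indicator_of_notMem hy,
        mul_zero]
  simp_rw [hpt]
  rw [lintegral_const_mul _ (Jt_meas s 1),
    ← mul_assoc, ← ENNReal.ofReal_mul (by positivity),
    ← Real.rpow_add hR, lintegral_indicator measurableSet_ball.compl]
  rw [Jt]
  ring_nf

lemma Jt_one_lt_top {s : ℝ} (hs : 1/2 < s) : Jt s 1 < ⊤ := by
  have h6s : (3:ℝ) < 6 * s := by linarith
  have hint : Integrable (fun x : E3 => (1 + ‖x‖) ^ (-(6*s))) := by
    apply integrable_one_add_norm; simpa using h6s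
  have hle : ∀ x : E3, x ∈ (ball (0:E3) 1)ᶜ →
      ENNReal.ofReal (‖x‖ ^ (-(6*s))) ≤
        ENNReal.ofReal (2 ^ (6*s) * (1 + ‖x‖) ^ (-(6*s))) := by
    intro x hx
    simp only [mem_compl_iff, mem_ball, dist_zero_right, not_lt] at hx
    apply ENNReal.ofReal_le_ofReal
    have h1 : (1 + ‖x‖) / 2 ≤ ‖x‖ := by linarith
    have h2 : ‖x‖ ^ (-(6*s)) ≤ ((1 + ‖x‖)/2) ^ (-(6*s)) := by
      apply Real.rpow_le_rpow_of_nonpos (by positivity) h1 (by linarith)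
    calc ‖x‖ ^ (-(6*s)) ≤ ((1 + ‖x‖)/2) ^ (-(6*s)) := h2
      _ = 2 ^ (6*s) * (1 + ‖x‖) ^ (-(6*s)) := by
          rw [Real.div_rpow (by positivity) (by norm_num : (0:ℝ) ≤ 2),
            Real.rpow_neg (by norm_num : (0:ℝ) ≤ 2), div_eq_mul_inv, inv_inv]
          ring
  calc Jt s 1 ≤ ∫⁻ x in (ball (0:E3) 1)ᶜ,
        ENNReal.ofReal (2 ^ (6*s) * (1 + ‖x‖) ^ (-(6*s))) ∂volume := by
        apply setLIntegral_mono' measurableSet_ball.compl hle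
    _ ≤ ∫⁻ x : E3, ENNReal.ofReal (2 ^ (6*s) * (1 + ‖x‖) ^ (-(6*s))) ∂volume :=
        setLIntegral_le_lintegral _ _
    _ < ⊤ := by
        have := (hint.const_mul (2 ^ (6*s))).hasFiniteIntegral
        rw [HasFiniteIntegral] at this
        refine lt_of_le_of_lt (lintegral_mono fun x => ?_) this
        rw [← ofReal_norm]
        apply ENNReal.ofReal_le_ofReal
        exact le_abs_self _

lemma phi_eLpNorm (s : ℝ) (R : ℝ) :
    eLpNorm (((ball (0:E3) R)ᶜ).indicator (fun x : E3 => ‖x‖ ^ (-s))) 6 volume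
      = (Jt s R) ^ ((1:ℝ)/6) := by
  rw [eLpNorm_eq_lintegral_rpow_enorm_toReal (by norm_num) (by norm_num)]
  have h6 : ((6:ℝ≥0∞)).toReal = (6:ℝ) := by norm_num
  congr 1
  · rw [Jt, ← lintegral_indicator measurableSet_ball.compl]
    congr 1; funext x
    by_cases hx : x ∈ (ball (0:E3) R)ᶜ
    · rw [Set.indicator_of_mem hx, Set.indicator_of_mem hx, h6,
        Real.enorm_eq_ofReal (Real.rpow_nonneg (norm_nonneg x) _),
        ENNReal.ofReal_rpow_of_nonneg (Real.rpow_nonneg (norm_nonneg x) _) (by norm_num),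
        ← Real.rpow_mul (norm_nonneg x)]
      ring_nf
    · rw [Set.indicator_of_notMem hx, Set.indicator_of_notMem hx]
      simp [h6]

lemma p32_facts : (ENNReal.ofReal (3/2) ≠ 0) ∧ (ENNReal.ofReal (3/2) ≠ ⊤) ∧
    (1 ≤ ENNReal.ofReal (3/2)) ∧ (ENNReal.ofReal (3/2) ≤ 2) ∧
    ((ENNReal.ofReal (3/2)).toReal = 3/2) := by
  refine ⟨?_, ENNReal.ofReal_ne_top, ?_, ?_, ENNReal.toReal_ofReal (by norm_num)⟩
  · simp [ENNReal.ofReal_eq_zero]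
  · rw [← ENNReal.ofReal_one]; exact ENNReal.ofReal_le_ofReal (by norm_num)
  · rw [show (2:ℝ≥0∞) = ENNReal.ofReal 2 by norm_num]
    exact ENNReal.ofReal_le_ofReal (by norm_num)

lemma holder_exp : 1 / ENNReal.ofReal (3/2) = 1/6 + 1/(2:ℝ≥0∞) := by
  rw [show (1:ℝ≥0∞) = ENNReal.ofReal 1 by norm_num,
    show (6:ℝ≥0∞) = ENNReal.ofReal 6 by norm_num,
    show (2:ℝ≥0∞) = ENNReal.ofReal 2 by norm_num,
    ← ENNReal.ofReal_div_of_pos (by norm_num), ← ENNReal.ofReal_div_of_pos (by norm_num),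
    ← ENNReal.ofReal_div_of_pos (by norm_num), ← ENNReal.ofReal_add (by norm_num) (by norm_num)]
  norm_num

lemma main_est {s : ℝ} (hs : 1/2 < s) (f : E3 → ℂ)
    (hf : MemLp f 2 volume)
    (hg : MemLp (fun x : E3 => (‖x‖ ^ s : ℝ) • f x) 2 volume)
    {R : ℝ} (hR : 0 < R) :
    eLpNorm f (ENNReal.ofReal (3/2)) volume ≤
      ENNReal.ofReal (R ^ ((1:ℝ)/2)) * (volume (ball (0:E3) 1)) ^ ((1:ℝ)/6) *
        eLpNorm f 2 volume
      + ENNReal.ofReal (R ^ ((1:ℝ)/2 - s)) * (Jt s 1) ^ ((1:ℝ)/6) *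
        eLpNorm (fun x : E3 => (‖x‖ ^ s : ℝ) • f x) 2 volume := by
  obtain ⟨hp0, hptop, hp1, hp2, hpt⟩ := p32_facts
  set p := ENNReal.ofReal (3/2) with hp
  set g := fun x : E3 => (‖x‖ ^ s : ℝ) • f x with hgdef
  set φ := ((ball (0:E3) R)ᶜ).indicator (fun x : E3 => ‖x‖ ^ (-s)) with hφdef
  have hφm : Measurable φ :=
    Measurable.indicator (measurable_norm.pow measurable_const) measurableSet_ball.compl
  -- split
  have hsplit : eLpNorm f p volume ≤
      eLpNorm ((ball (0:E3) R).indicator f) p volume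
      + eLpNorm (((ball (0:E3) R)ᶜ).indicator f) p volume := by
    conv_lhs => rw [← Set.indicator_self_add_compl (ball (0:E3) R) f]
    exact eLpNorm_add_le (hf.1.indicator measurableSet_ball)
      (hf.1.indicator measurableSet_ball.compl) hp1
  -- inner estimate
  have hinner : eLpNorm ((ball (0:E3) R).indicator f) p volume ≤
      ENNReal.ofReal (R ^ ((1:ℝ)/2)) * (volume (ball (0:E3) 1)) ^ ((1:ℝ)/6) *
        eLpNorm f 2 volume := by
    rw [eLpNorm_indicator_eq_eLpNorm_restrict measurableSet_ball]
    calc eLpNorm f p (volume.restrict (ball (0:E3) R))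
        ≤ eLpNorm f 2 (volume.restrict (ball (0:E3) R)) *
            (volume.restrict (ball (0:E3) R)) Set.univ ^ (1/p.toReal - 1/(2:ℝ≥0∞).toReal) :=
          eLpNorm_le_eLpNorm_mul_rpow_measure_univ hp2 hf.1.restrict
      _ ≤ eLpNorm f 2 volume * (volume (ball (0:E3) R)) ^ ((1:ℝ)/6) := by
          gcongr
          · exact Measure.restrict_le_self
          · rw [Measure.restrict_apply_univ, hpt]
            norm_num
      _ = ENNReal.ofReal (R ^ ((1:ℝ)/2)) * (volume (ball (0:E3) 1)) ^ ((1:ℝ)/6) *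
            eLpNorm f 2 volume := by
          rw [Measure.addHaar_ball volume _ hR.le, finrank_euclideanSpace_fin,
            ENNReal.mul_rpow_of_nonneg _ _ (by norm_num : (0:ℝ) ≤ 1/6),
            ← Real.rpow_natCast R 3, ENNReal.ofReal_rpow_of_nonneg (by positivity) (by norm_num),
            ← Real.rpow_mul hR.le]
          norm_num
          ring
  -- outer estimate
  have hptw : ((ball (0:E3) R)ᶜ).indicator f = φ • g := by
    funext x
    by_cases hx : x ∈ (ball (0:E3) R)ᶜ
    · have hxn : 0 < ‖x‖ := by
        simp only [mem_compl_iff, mem_ball, dist_zero_right, not_lt] at hx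
        linarith
      rw [Set.indicator_of_mem hx, Pi.smul_apply', hφdef, Set.indicator_of_mem hx, hgdef]
      rw [smul_smul, ← Real.rpow_add hxn, neg_add_cancel, Real.rpow_zero, one_smul]
    · rw [Set.indicator_of_notMem hx, Pi.smul_apply', hφdef, Set.indicator_of_notMem hx,
        zero_smul]
  have houter : eLpNorm (((ball (0:E3) R)ᶜ).indicator f) p volume ≤
      ENNReal.ofReal (R ^ ((1:ℝ)/2 - s)) * (Jt s 1) ^ ((1:ℝ)/6) * eLpNorm g 2 volume := by
    rw [hptw]
    calc eLpNorm (φ • g) p volume ≤ eLpNorm φ 6 volume * eLpNorm g 2 volume :=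
          eLpNorm_smul_le_mul_eLpNorm hg.1 hφm.aestronglyMeasurable
            (hpqr := ⟨by simpa only [one_div] using holder_exp.symm⟩)
      _ = ENNReal.ofReal (R ^ ((1:ℝ)/2 - s)) * (Jt s 1) ^ ((1:ℝ)/6) * eLpNorm g 2 volume := by
          rw [hφdef, phi_eLpNorm s R, Jt_eq s hR,
            ENNReal.mul_rpow_of_nonneg _ _ (by norm_num : (0:ℝ) ≤ 1/6),
            ENNReal.ofReal_rpow_of_nonneg (by positivity) (by norm_num),
            ← Real.rpow_mul hR.le]
          ring_nf
  calc eLpNorm f p volume ≤ _ := hsplit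
    _ ≤ _ := add_le_add hinner houter


/-- Weighted interpolation inequality in ℝ³: for `s > 1/2`,
`‖f‖_{L^{3/2}} ≤ C ‖f‖_{L²}^{1-1/(2s)} ‖ |x|^s f ‖_{L²}^{1/(2s)}`. -/
theorem stmt_3 (s : ℝ) (hs : 1/2 < s) :
    ∃ C : ℝ, ∀ f : EuclideanSpace ℝ (Fin 3) → ℂ,
      MemLp f 2 volume →
      MemLp (fun x => (‖x‖ ^ s : ℝ) • f x) 2 volume →
      MemLp f (ENNReal.ofReal (3/2)) volume ∧
      (eLpNorm f (ENNReal.ofReal (3/2)) volume).toReal ≤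
        C * (eLpNorm f 2 volume).toReal ^ (1 - 1/(2*s)) *
          (eLpNorm (fun x => (‖x‖ ^ s : ℝ) • f x) 2 volume).toReal ^ (1/(2*s)) := by
  have hs0 : (0:ℝ) < s := by linarith
  set c1 : ℝ≥0∞ := (volume (ball (0:E3) 1)) ^ ((1:ℝ)/6) with hc1
  set c2 : ℝ≥0∞ := (Jt s 1) ^ ((1:ℝ)/6) with hc2
  have hc1top : c1 ≠ ⊤ :=
    (ENNReal.rpow_lt_top_of_nonneg (by norm_num) measure_ball_lt_top.ne).ne
  have hc2top : c2 ≠ ⊤ :=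
    (ENNReal.rpow_lt_top_of_nonneg (by norm_num) (Jt_one_lt_top hs).ne).ne
  refine ⟨(c1 + c2).toReal, fun f hf hg => ?_⟩
  set g := fun x : E3 => (‖x‖ ^ s : ℝ) • f x with hgdef
  set A := eLpNorm f 2 volume with hA
  set B := eLpNorm g 2 volume with hB
  have hAtop : A ≠ ⊤ := hf.2.ne
  have hBtop : B ≠ ⊤ := hg.2.ne
  have hCnn : (0:ℝ) ≤ (c1 + c2).toReal := ENNReal.toReal_nonneg
  -- Memℒp part
  have hmem : MemLp f (ENNReal.ofReal (3/2)) volume := by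
    refine ⟨hf.1, ?_⟩
    refine lt_of_le_of_lt (main_est hs f hf hg one_pos) ?_
    apply ENNReal.add_lt_top.mpr
    constructor
    · exact ENNReal.mul_lt_top (ENNReal.mul_lt_top ENNReal.ofReal_lt_top hc1top.lt_top)
        hAtop.lt_top
    · exact ENNReal.mul_lt_top (ENNReal.mul_lt_top ENNReal.ofReal_lt_top hc2top.lt_top)
        hBtop.lt_top
  refine ⟨hmem, ?_⟩
  -- degenerate case
  by_cases hf0 : f =ᵐ[volume] 0
  · rw [eLpNorm_congr_ae hf0, eLpNorm_zero, ENNReal.toReal_zero]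
    have h1 : (0:ℝ) ≤ A.toReal ^ (1 - 1/(2*s)) := Real.rpow_nonneg ENNReal.toReal_nonneg _
    have h2 : (0:ℝ) ≤ B.toReal ^ (1/(2*s)) := Real.rpow_nonneg ENNReal.toReal_nonneg _
    positivity
  have hA0 : A ≠ 0 := by
    intro h
    exact hf0 ((eLpNorm_eq_zero_iff hf.1 (by norm_num)).mp h)
  have hB0 : B ≠ 0 := by
    intro h
    have hg0 : g =ᵐ[volume] 0 := (eLpNorm_eq_zero_iff hg.1 (by norm_num)).mp h
    have hne : ∀ᵐ (x : E3) ∂volume, x ≠ 0 := by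
      have hset : {x : E3 | ¬ x ≠ 0} = {(0:E3)} := by ext x; simp
      rw [MeasureTheory.ae_iff, hset]
      exact measure_singleton (0:E3)
    apply hf0
    filter_upwards [hg0, hne] with x hx hxne
    have hxn : 0 < ‖x‖ := norm_pos_iff.mpr hxne
    have hpow : (‖x‖ ^ s : ℝ) ≠ 0 := (Real.rpow_pos_of_pos hxn s).ne'
    have : (‖x‖ ^ s : ℝ) • f x = 0 := hx
    simpa [hpow] using (smul_eq_zero.mp this).resolve_left hpow
  set a := A.toReal with ha'
  set b := B.toReal with hb'
  have ha : 0 < a := ENNReal.toReal_pos hA0 hAtop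
  have hb : 0 < b := ENNReal.toReal_pos hB0 hBtop
  set t := 1/(2*s) with ht'
  set R := (b/a) ^ ((1:ℝ)/s) with hRdef
  have hR : 0 < R := Real.rpow_pos_of_pos (div_pos hb ha) _
  have hba : 0 < b/a := div_pos hb ha
  set K := a ^ (1 - t) * b ^ t with hK
  have hKpos : 0 < K := by positivity
  -- real identities
  have hid1 : R ^ ((1:ℝ)/2) * a = K := by
    have h1 : R ^ ((1:ℝ)/2) = b ^ t * a ^ (-t) := by
      rw [hRdef, ← Real.rpow_mul hba.le,
        show (1:ℝ)/s * (1/2) = t by rw [ht']; field_simp,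
        Real.div_rpow hb.le ha.le, Real.rpow_neg ha.le, div_eq_mul_inv]
    calc R ^ ((1:ℝ)/2) * a = b ^ t * (a ^ (-t) * a ^ (1:ℝ)) := by
          rw [h1, Real.rpow_one, mul_assoc]
      _ = b ^ t * a ^ (1 - t) := by rw [← Real.rpow_add ha]; ring_nf
      _ = K := by rw [hK]; ring
  have hid2 : R ^ ((1:ℝ)/2 - s) * b = K := by
    have h1 : R ^ ((1:ℝ)/2 - s) = b ^ (t - 1) * a ^ (-(t - 1)) := by
      rw [hRdef, ← Real.rpow_mul hba.le,
        show (1:ℝ)/s * (1/2 - s) = t - 1 by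
          rw [ht', mul_sub, one_div_mul_cancel (ne_of_gt hs0), div_mul_div_comm, one_mul,
            mul_comm s 2],
        Real.div_rpow hb.le ha.le, Real.rpow_neg ha.le, div_eq_mul_inv]
    calc R ^ ((1:ℝ)/2 - s) * b = b ^ (t - 1) * b ^ (1:ℝ) * a ^ (-(t - 1)) := by
          rw [h1, Real.rpow_one]; ring
      _ = b ^ t * a ^ (1 - t) := by
          rw [← Real.rpow_add hb]
          ring_nf
      _ = K := by rw [hK]; ring
  -- ENNReal estimate
  have est := main_est hs f hf hg hR
  rw [← hA, ← hB] at est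
  have hAe : A = ENNReal.ofReal a := (ENNReal.ofReal_toReal hAtop).symm
  have hBe : B = ENNReal.ofReal b := (ENNReal.ofReal_toReal hBtop).symm
  have e1 : ENNReal.ofReal (R ^ ((1:ℝ)/2)) * (volume (ball (0:E3) 1)) ^ ((1:ℝ)/6) *
      ENNReal.ofReal a = c1 * ENNReal.ofReal K := by
    rw [mul_comm (ENNReal.ofReal (R ^ ((1:ℝ)/2))), mul_assoc,
      ← ENNReal.ofReal_mul (by positivity), hid1, hc1]
  have e2 : ENNReal.ofReal (R ^ ((1:ℝ)/2 - s)) * (Jt s 1) ^ ((1:ℝ)/6) *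
      ENNReal.ofReal b = c2 * ENNReal.ofReal K := by
    rw [mul_comm (ENNReal.ofReal (R ^ ((1:ℝ)/2 - s))), mul_assoc,
      ← ENNReal.ofReal_mul (by positivity), hid2, hc2]
  have est2 : eLpNorm f (ENNReal.ofReal (3/2)) volume ≤ (c1 + c2) * ENNReal.ofReal K := by
    refine est.trans (le_of_eq ?_)
    rw [hAe, hBe, e1, e2, ← add_mul]
  have final := ENNReal.toReal_mono
    (ENNReal.mul_ne_top (by finiteness) ENNReal.ofReal_ne_top) est2
  rw [ENNReal.toReal_mul, ENNReal.toReal_ofReal hKpos.le] at final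
  calc (eLpNorm f (ENNReal.ofReal (3/2)) volume).toReal ≤ (c1 + c2).toReal * K := final
    _ = (c1 + c2).toReal * a ^ (1 - t) * b ^ t := by
        rw [hK]; ring
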